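/- Equilibrium characterization of the closed-form solution of Proposition 2: (i) if Σ_j l j > γ/(1 − ε), then the pair (u*, v*) with u* = 1 and v* j = ε for all j is an equilibrium of the alternating scheme: v* is the unique minimizer of v ↦ E(u*, v) over [0, ε]^m and u* is the unique maximizer of u ↦ E(u, v*) over {0, 1}. (ii) If Σ_j l j < γ, then the pair (u*, v*) with u* = 0 and v* j = 0 if l j > λ j, v* j = 1 − (l j)/(λ j) if (λ j)·(1 − ε) ≤ l j ≤ λ j, and v* j = ε if l j < (λ j)·(1 − ε), is likewise an equilibrium: v* is the unique minimizer of v ↦ E(u*, v) over [0, ε]^m and u* is the unique maximizer of u ↦ E(u, v*) over {0, 1}. -/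

import Mathlib

open Finset

/-- Objective `E(u, v) = Σ_j max(u, v j) · l j − γ·u + (1/2)·Σ_j λ j · ((v j)² − 2·(v j))`. -/
noncomputable def Eobj (m : ℕ) (l lam : Fin m → ℝ) (γ : ℝ) (u : ℝ) (v : Fin m → ℝ) : ℝ :=
  (∑ j, max u (v j) * l j) - γ * u + (1 / 2) * ∑ j, lam j * ((v j) ^ 2 - 2 * v j)

lemma coord_key (lam c s t : ℝ) (hlam : 0 < lam) (h : 0 ≤ (lam * s + c - lam) * (t - s)) :
    c * s + 1/2 * lam * (s^2 - 2*s) ≤ c * t + 1/2 * lam * (t^2 - 2*t) ∧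
      (c * t + 1/2 * lam * (t^2 - 2*t) = c * s + 1/2 * lam * (s^2 - 2*s) → t = s) := by
  have hint : 0 ≤ lam * (t - s)^2 := mul_nonneg hlam.le (sq_nonneg _)
  constructor
  · nlinarith
  · intro he
    have h2 : lam * (t - s)^2 ≤ 0 := by nlinarith
    have h3 : (t - s)^2 ≤ 0 := nonpos_of_mul_nonpos_right (by linarith [mul_comm lam ((t-s)^2)]) hlam
    have h4 := sq_eq_zero_iff.mp (le_antisymm h3 (sq_nonneg _))
    linarith

lemma sum_min {m : ℕ} (F : Fin m → ℝ → ℝ) (v w : Fin m → ℝ)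
    (h : ∀ j, F j (w j) ≤ F j (v j) ∧ (F j (v j) = F j (w j) → v j = w j)) :
    (∑ j, F j (w j)) ≤ (∑ j, F j (v j)) ∧
      ((∑ j, F j (v j)) = (∑ j, F j (w j)) → v = w) := by
  constructor
  · exact Finset.sum_le_sum fun j _ => (h j).1
  · intro he
    funext j
    have := (Finset.sum_eq_sum_iff_of_le (fun j _ => (h j).1)).mp he.symm j (Finset.mem_univ j)
    exact (h j).2 this.symm

lemma Eobj_eq (m : ℕ) (l lam : Fin m → ℝ) (γ u : ℝ) (v : Fin m → ℝ) :
    Eobj m l lam γ u v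
      = (∑ j, (max u (v j) * l j + 1/2 * lam j * ((v j)^2 - 2 * v j))) - γ * u := by
  unfold Eobj
  rw [Finset.sum_add_distrib, Finset.mul_sum]
  ring_nf

set_option maxHeartbeats 2000000 in
/-- Equilibrium characterization of the closed-form solutions of Proposition 2:
    (i) if `Σ_j l j > γ/(1 − ε)`, then `(u*, v*) = (1, (ε, …, ε))` is an equilibrium:
    `v*` is the unique minimizer of `v ↦ E(1, v)` over the cube and `1` is the unique
    maximizer of `u ↦ E(u, v*)` over `{0, 1}`;
    (ii) if `Σ_j l j < γ`, then `u* = 0` together with the piecewise `v*` is likewise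
    an equilibrium. -/
theorem prop2_equilibrium (m : ℕ) (hm : 0 < m)
    (l : Fin m → ℝ) (hl : ∀ j, 0 ≤ l j)
    (lam : Fin m → ℝ) (hlam : ∀ j, 0 < lam j)
    (γ : ℝ) (hγ : 0 < γ) (ε : ℝ) (hε0 : 0 < ε) (hε1 : ε < 1) :
    (γ / (1 - ε) < ∑ j, l j →
      let vstar : Fin m → ℝ := fun _ => ε
      (∀ j, 0 ≤ vstar j ∧ vstar j ≤ ε) ∧
        (∀ v : Fin m → ℝ, (∀ j, 0 ≤ v j ∧ v j ≤ ε) →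
          Eobj m l lam γ 1 vstar ≤ Eobj m l lam γ 1 v ∧
            (Eobj m l lam γ 1 v = Eobj m l lam γ 1 vstar → v = vstar)) ∧
        (∀ u ∈ ({0, 1} : Set ℝ),
          Eobj m l lam γ u vstar ≤ Eobj m l lam γ 1 vstar ∧
            (Eobj m l lam γ u vstar = Eobj m l lam γ 1 vstar → u = 1))) ∧
    ((∑ j, l j) < γ →
      let vstar : Fin m → ℝ := fun j =>
        if lam j < l j then 0
        else if l j < lam j * (1 - ε) then ε
        else 1 - l j / lam j
      (∀ j, 0 ≤ vstar j ∧ vstar j ≤ ε) ∧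
        (∀ v : Fin m → ℝ, (∀ j, 0 ≤ v j ∧ v j ≤ ε) →
          Eobj m l lam γ 0 vstar ≤ Eobj m l lam γ 0 v ∧
            (Eobj m l lam γ 0 v = Eobj m l lam γ 0 vstar → v = vstar)) ∧
        (∀ u ∈ ({0, 1} : Set ℝ),
          Eobj m l lam γ u vstar ≤ Eobj m l lam γ 0 vstar ∧
            (Eobj m l lam γ u vstar = Eobj m l lam γ 0 vstar → u = 0))) := by
  have h1ε : 0 < 1 - ε := by linarith
  constructor
  · -- Case (i)
    intro hsum
    intro vstar
    have hvs : ∀ j, vstar j = ε := fun j => rfl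
    refine ⟨fun j => ⟨hε0.le, le_refl ε⟩, ?_, ?_⟩
    · -- v minimization
      intro v hv
      set F : Fin m → ℝ → ℝ :=
        fun j t => max 1 t * l j + 1/2 * lam j * (t^2 - 2 * t) with hF
      have hkey : ∀ j, F j (vstar j) ≤ F j (v j) ∧ (F j (v j) = F j (vstar j) → v j = vstar j) := by
        intro j
        have hck := coord_key (lam j) 0 ε (v j) (hlam j)
          (by nlinarith [mul_nonneg (mul_nonneg (hlam j).le (by linarith : (0:ℝ) ≤ 1 - ε))
               (by linarith [(hv j).2] : (0:ℝ) ≤ ε - v j)])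
        have hm1 : max 1 (v j) = 1 := max_eq_left (by linarith [(hv j).2])
        have hm2 : max 1 (vstar j) = (1:ℝ) := max_eq_left (by rw [hvs j]; linarith)
        constructor
        · simp only [hF, hm1, hm2, hvs, max_eq_left hε1.le]
          nlinarith [hck.1]
        · intro he
          simp only [hF, hm1, hm2, hvs, max_eq_left hε1.le] at he ⊢
          exact hck.2 (by nlinarith [he])
      have hsm := sum_min F v vstar hkey
      rw [Eobj_eq, Eobj_eq]
      exact ⟨by linarith [hsm.1], fun he => hsm.2 (by linarith [he])⟩
    · -- u maximization
      intro u hu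
      have hpos : γ < (1 - ε) * ∑ j, l j := by
        rw [div_lt_iff₀ h1ε] at hsum
        nlinarith
      have hE1 : Eobj m l lam γ 1 vstar
          = (∑ j, l j) - γ + (1/2) * ∑ j, lam j * (ε^2 - 2*ε) := by
        unfold Eobj
        simp [hvs, max_eq_left hε1.le]
      have hE0 : Eobj m l lam γ 0 vstar
          = ε * (∑ j, l j) + (1/2) * ∑ j, lam j * (ε^2 - 2*ε) := by
        unfold Eobj
        simp [hvs, max_eq_right hε0.le, Finset.mul_sum]
      rcases hu with rfl | hu
      · rw [hE0, hE1]
        constructor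
        · nlinarith
        · intro he; exfalso; nlinarith
      · rw [Set.mem_singleton_iff] at hu
        subst hu
        exact ⟨le_refl _, fun _ => rfl⟩
  · -- Case (ii)
    intro hsum
    intro vstar
    have hvdef : ∀ j, vstar j
        = if lam j < l j then (0:ℝ) else if l j < lam j * (1 - ε) then ε else 1 - l j / lam j :=
      fun j => rfl
    clear_value vstar
    have hbounds : ∀ j, 0 ≤ vstar j ∧ vstar j ≤ ε := by
      intro j
      rw [hvdef j]
      split_ifs with h1 h2
      · exact ⟨le_refl 0, hε0.le⟩
      · exact ⟨hε0.le, le_refl ε⟩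
      · push_neg at h1 h2
        constructor
        · have : l j / lam j ≤ 1 := by
            rw [div_le_one (hlam j)]; exact h1
          linarith
        · have : 1 - ε ≤ l j / lam j := by
            rw [le_div_iff₀ (hlam j)]; linarith [h2]
          linarith
    refine ⟨hbounds, ?_, ?_⟩
    · -- v minimization
      intro v hv
      set F : Fin m → ℝ → ℝ :=
        fun j t => max 0 t * l j + 1/2 * lam j * (t^2 - 2 * t) with hF
      have hkey : ∀ j, F j (vstar j) ≤ F j (v j) ∧ (F j (v j) = F j (vstar j) → v j = vstar j) := by
        intro j
        have hderiv : 0 ≤ (lam j * vstar j + l j - lam j) * (v j - vstar j) := by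
          by_cases h1 : lam j < l j
          · have hvj : vstar j = 0 := by rw [hvdef j, if_pos h1]
            rw [hvj]
            nlinarith [(hv j).1]
          · by_cases h2 : l j < lam j * (1 - ε)
            · have hvj : vstar j = ε := by rw [hvdef j, if_neg h1, if_pos h2]
              rw [hvj]
              nlinarith [mul_nonneg (by linarith : (0:ℝ) ≤ lam j * (1 - ε) - l j)
                (by linarith [(hv j).2] : (0:ℝ) ≤ ε - v j)]
            · have hvj : vstar j = 1 - l j / lam j := by
                rw [hvdef j, if_neg h1, if_neg h2]
              rw [hvj]
              have hz : lam j * (1 - l j / lam j) + l j - lam j = 0 := by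
                have hne : lam j ≠ 0 := (hlam j).ne'
                field_simp
                ring
              rw [hz, zero_mul]
        have hck := coord_key (lam j) (l j) (vstar j) (v j) (hlam j) hderiv
        have hm1 : max 0 (v j) = v j := max_eq_right (hv j).1
        have hm2 : max 0 (vstar j) = vstar j := max_eq_right (hbounds j).1
        constructor
        · simp only [hF, hm1, hm2]
          nlinarith [hck.1]
        · intro he
          simp only [hF, hm1, hm2] at he
          exact hck.2 (by nlinarith [he])
      have hsm := sum_min F v vstar hkey
      rw [Eobj_eq, Eobj_eq]
      exact ⟨by linarith [hsm.1], fun he => hsm.2 (by linarith [he])⟩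
    · -- u maximization
      intro u hu
      have hE1 : Eobj m l lam γ 1 vstar
          = (∑ j, l j) - γ + (1/2) * ∑ j, lam j * ((vstar j)^2 - 2 * vstar j) := by
        have h1 : ∀ j, max 1 (vstar j) = 1 := fun j =>
          max_eq_left (by linarith [(hbounds j).2])
        unfold Eobj
        rw [show (∑ j, max 1 (vstar j) * l j) = ∑ j, l j from
          Finset.sum_congr rfl fun j _ => by rw [h1 j, one_mul]]
        ring
      have hE0 : Eobj m l lam γ 0 vstar
          = (∑ j, vstar j * l j) + (1/2) * ∑ j, lam j * ((vstar j)^2 - 2 * vstar j) := by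
        have h0 : ∀ j, max 0 (vstar j) = vstar j := fun j => max_eq_right (hbounds j).1
        unfold Eobj
        rw [show (∑ j, max 0 (vstar j) * l j) = ∑ j, vstar j * l j from
          Finset.sum_congr rfl fun j _ => by rw [h0 j]]
        ring
      have hnn : 0 ≤ ∑ j, vstar j * l j :=
        Finset.sum_nonneg fun j _ => mul_nonneg (hbounds j).1 (hl j)
      rcases hu with rfl | hu
      · exact ⟨le_refl _, fun _ => rfl⟩
      · rw [Set.mem_singleton_iff] at hu
        subst hu
        rw [hE0, hE1]
        constructor
        · linarith
        · intro he; exfalso; linarith
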